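/- Let φ be a continuous flow on a compact metric space X. For every δ' > 0 there is δ > 0 such that if x, y ∈ X, g = (h₁,h₂) ∈ ℋ² and T > 0 satisfy d(φ_{h₁(t)}x, φ_{h₂(t)}y) < δ for all t ∈ [0,T], then there exists h ∈ ℋ⁺ with d(φ_{h(t)}x, φ_t y) < δ' for all t ∈ [0, h₂(T)]. -/

import Mathlib

open Metric Set

/-- A continuous flow on `X`. -/
def IsFlow {X : Type*} [TopologicalSpace X] (φ : ℝ → X → X) : Prop :=
  Continuous (fun p : ℝ × X => φ p.1 p.2) ∧
  (∀ x, φ 0 x = x) ∧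
  (∀ s t x, φ (s + t) x = φ s (φ t x))

/-- A singular point of the flow (an equilibrium). -/
def IsSingular {X : Type*} (φ : ℝ → X → X) (x : X) : Prop := ∀ t : ℝ, φ t x = x

/-- A reparameterization: an increasing homeomorphism of `ℝ` fixing `0`. -/
def Reparam (h : ℝ → ℝ) : Prop :=
  StrictMono h ∧ Continuous h ∧ Function.Surjective h ∧ h 0 = 0

/-- A reparameterization with rests: continuous, surjective, non-decreasing, fixing `0`. -/
def ReparamRest (h : ℝ → ℝ) : Prop :=
  Monotone h ∧ Continuous h ∧ Function.Surjective h ∧ h 0 = 0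

/-- Positive expansiveness in the sense of Bowen–Walters. -/
def PosExpansive {X : Type*} [MetricSpace X] (φ : ℝ → X → X) : Prop :=
  ∀ ε > (0 : ℝ), ∃ δ > (0 : ℝ), ∀ x y : X, ∀ h : ℝ → ℝ, Reparam h →
    (∀ t ≥ (0 : ℝ), dist (φ (h t) x) (φ t y) < δ) →
    ∃ s : ℝ, |s| ≤ ε ∧ y = φ s x

/-- The orbit of a point under the flow. -/
def flowOrbit {X : Type*} (φ : ℝ → X → X) (x : X) : Set X := Set.range fun t => φ t x

open Filter

section aux


/-- key uniform continuity fact: small time shifts move points little -/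
lemma flow_small_shift {X : Type*} [MetricSpace X] [CompactSpace X] (φ : ℝ → X → X)
    (hc : Continuous (fun p : ℝ × X => φ p.1 p.2)) (h0 : ∀ x, φ 0 x = x)
    {η : ℝ} (hη : 0 < η) :
    ∃ ε : ℝ, 0 < ε ∧ ε ≤ 1 ∧ ∀ r : ℝ, |r| ≤ ε → ∀ z : X, dist (φ r z) z < η := by
  have hK : IsCompact ((Set.Icc (-1 : ℝ) 1) ×ˢ (Set.univ : Set X)) :=
    isCompact_Icc.prod isCompact_univ
  have hF : Continuous (fun p : ℝ × X => dist (φ p.1 p.2) p.2) :=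
    hc.dist continuous_snd
  have huc := hK.uniformContinuousOn_of_continuous hF.continuousOn
  rw [Metric.uniformContinuousOn_iff] at huc
  obtain ⟨δ₀, hδ₀, hδ⟩ := huc η hη
  refine ⟨min (δ₀ / 2) 1, by positivity, min_le_right _ _, ?_⟩
  intro r hr z
  have hr1 : |r| ≤ 1 := hr.trans (min_le_right _ _)
  have habs := abs_le.mp hr1
  have h1 : ((r, z) : ℝ × X) ∈ (Set.Icc (-1 : ℝ) 1) ×ˢ (Set.univ : Set X) :=
    ⟨⟨habs.1, habs.2⟩, Set.mem_univ _⟩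
  have h2 : (((0 : ℝ), z) : ℝ × X) ∈ (Set.Icc (-1 : ℝ) 1) ×ˢ (Set.univ : Set X) :=
    ⟨⟨by norm_num, by norm_num⟩, Set.mem_univ _⟩
  have hdist : dist ((r, z) : ℝ × X) ((0 : ℝ), z) < δ₀ := by
    rw [Prod.dist_eq]
    simp only [dist_self, Real.dist_eq, sub_zero]
    have : |r| < δ₀ := lt_of_le_of_lt (hr.trans (min_le_left _ _)) (by linarith)
    simpa [max_eq_left (abs_nonneg r)] using this
  have := hδ _ h1 _ h2 hdist
  simp only [h0 z, dist_self] at this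
  rw [Real.dist_eq, sub_zero] at this
  calc dist (φ r z) z ≤ |dist (φ r z) z| := le_abs_self _
    _ < η := this
end aux

/-- Closeness along reparameterizations with rests on `[0,T]` implies closeness along a
genuine reparameterization on `[0, h₂ T]`. -/
theorem reparamRest_close_implies_reparam_close_on_interval
    {X : Type*} [MetricSpace X] [CompactSpace X] (φ : ℝ → X → X) (hφ : IsFlow φ) :
    ∀ δ' > (0 : ℝ), ∃ δ > (0 : ℝ), ∀ x y : X, ∀ h₁ h₂ : ℝ → ℝ, ∀ T : ℝ,
      ReparamRest h₁ → ReparamRest h₂ → 0 < T →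
      (∀ t ∈ Set.Icc (0 : ℝ) T, dist (φ (h₁ t) x) (φ (h₂ t) y) < δ) →
      ∃ h : ℝ → ℝ, Reparam h ∧
        ∀ t ∈ Set.Icc (0 : ℝ) (h₂ T), dist (φ (h t) x) (φ t y) < δ' := by
  obtain ⟨hcont, hzero, hadd⟩ := hφ
  intro δ' hδ'
  obtain ⟨ε, hε, hε1, hkey⟩ := flow_small_shift φ hcont hzero (show (0:ℝ) < δ' / 3 by linarith)
  refine ⟨δ' / 3, by linarith, ?_⟩
  intro x y h₁ h₂ T hr₁ hr₂ hT hd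
  set c : ℝ := ε / (T + 1) with hc_def
  have hc : 0 < c := by positivity
  -- perturbed reparameterizations
  set u : ℝ → ℝ := fun t => h₂ t + c * t with hu_def
  set v : ℝ → ℝ := fun t => h₁ t + c * t with hv_def
  have lin_mono : StrictMono (fun t : ℝ => c * t) := fun a b hab => by
    simpa using mul_lt_mul_of_pos_left hab hc
  have lin_surj : Function.Surjective (fun t : ℝ => c * t) := fun b =>
    ⟨b / c, by field_simp⟩
  have lin_top : Tendsto (fun t : ℝ => c * t) atTop atTop :=
    tendsto_id.const_mul_atTop hc
  have lin_bot : Tendsto (fun t : ℝ => c * t) atBot atBot :=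
    tendsto_id.const_mul_atBot hc
  have mk_reparam : ∀ h : ℝ → ℝ, ReparamRest h → StrictMono (fun t => h t + c * t) ∧
      Continuous (fun t => h t + c * t) ∧ Function.Surjective (fun t => h t + c * t) ∧
      (fun t => h t + c * t) 0 = 0 := by
    intro h ⟨hm, hcnt, hs, h0⟩
    refine ⟨fun a b hab => add_lt_add_of_le_of_lt (hm hab.le) (lin_mono hab),
      hcnt.add (continuous_const.mul continuous_id), ?_, by simp [h0]⟩
    have htop : Tendsto h atTop atTop :=
      hm.tendsto_atTop_atTop (fun b => (hs b).imp fun a ha => ha.ge)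
    have hbot : Tendsto h atBot atBot :=
      hm.tendsto_atBot_atBot (fun b => (hs b).imp fun a ha => ha.le)
    exact (hcnt.add (continuous_const.mul continuous_id)).surjective
      (Filter.Tendsto.atTop_add_atTop htop lin_top) (Filter.Tendsto.atBot_add_atBot hbot lin_bot)
  obtain ⟨umono, ucont, usurj, u0⟩ := mk_reparam h₂ hr₂
  obtain ⟨vmono, vcont, vsurj, v0⟩ := mk_reparam h₁ hr₁
  set e : ℝ ≃o ℝ := StrictMono.orderIsoOfSurjective u umono usurj with he_def
  have he_app : ∀ t, e t = u t := fun t => rfl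
  have he_symm : ∀ s, u (e.symm s) = s := fun s =>
    StrictMono.orderIsoOfSurjective_self_symm_apply u umono usurj s
  have hesymm0 : e.symm 0 = 0 := by
    have : e.symm (e 0) = 0 := e.symm_apply_apply 0
    rwa [show e 0 = 0 from u0] at this
  refine ⟨fun s => v (e.symm s), ⟨?_, ?_, ?_, ?_⟩, ?_⟩
  · exact vmono.comp e.symm.strictMono
  · exact vcont.comp e.symm.continuous
  · exact vsurj.comp e.symm.surjective
  · show v (e.symm 0) = 0; rw [hesymm0]; exact v0
  · intro s hs
    set t : ℝ := e.symm s with ht_def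
    have hut : u t = s := he_symm s
    have ht0 : 0 ≤ t := by
      have := e.symm.monotone (show (0:ℝ) ≤ s from hs.1)
      rwa [hesymm0] at this
    have htT : t ≤ T := by
      have h1 : s ≤ u T := by
        have : h₂ T ≤ h₂ T + c * T := by nlinarith
        exact hs.2.trans this
      have := e.symm.monotone h1
      rwa [show e.symm (u T) = T from e.symm_apply_apply T] at this
    set r : ℝ := c * t with hr_def
    have hrε : |r| ≤ ε := by
      rw [abs_of_nonneg (by positivity)]
      have h1 : c * t ≤ c * T := by nlinarith
      have h2 : c * T ≤ ε := by
        rw [hc_def]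
        rw [div_mul_eq_mul_div, div_le_iff₀ (by linarith)]
        nlinarith
      linarith
    have hmid : dist (φ (h₁ t) x) (φ (h₂ t) y) < δ' / 3 := hd t ⟨ht0, htT⟩
    have hvx : φ (v t) x = φ r (φ (h₁ t) x) := by
      rw [show v t = r + h₁ t by rw [hv_def]; ring, hadd]
    have hsy : φ s y = φ r (φ (h₂ t) y) := by
      rw [← hut, show u t = r + h₂ t by rw [hu_def]; ring, hadd]
    have k1 : dist (φ r (φ (h₁ t) x)) (φ (h₁ t) x) < δ' / 3 := hkey r hrε _
    have k2 : dist (φ r (φ (h₂ t) y)) (φ (h₂ t) y) < δ' / 3 := hkey r hrε _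
    calc dist (φ (v (e.symm s)) x) (φ s y)
        ≤ dist (φ (v t) x) (φ (h₁ t) x) + dist (φ (h₁ t) x) (φ (h₂ t) y)
          + dist (φ (h₂ t) y) (φ s y) := by rw [← ht_def]; exact dist_triangle4 _ _ _ _
      _ < δ' / 3 + δ' / 3 + δ' / 3 := by
          rw [hvx, hsy, dist_comm (φ (h₂ t) y)]
          exact add_lt_add (add_lt_add k1 hmid) k2
      _ = δ' := by ring
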